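/- Let K = C_m ⊕ C_m with m ≥ 4, (f_1, f_2) a basis of K, S = f_1^{m−1} f_2^{m−1} (f_1 + f_2), and g ∈ K. If the sequence S' obtained from S by removing one copy of f_1 and one copy of f_2 and adding f_1 + g and f_2 − g lies in Υ(K), then S' = S and g ∈ {0, −f_1 + f_2}. -/

import Mathlib

/-- A minimal zero-sum sequence: nonempty, sum zero, and no proper nonempty
subsequence has sum zero. -/
def IsMinZeroSum {G : Type*} [AddCommGroup G] (S : Multiset G) : Prop :=
  S ≠ 0 ∧ S.sum = 0 ∧ ∀ T ≤ S, T ≠ 0 → T ≠ S → T.sum ≠ 0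

/-- `(e1, e2)` is a basis of a group of the form `C_n ⊕ C_n`: both elements have
order `n`, they generate the group, and they are independent. -/
def IsBasisPair {G : Type*} [AddCommGroup G] (n : ℕ) (e1 e2 : G) : Prop :=
  addOrderOf e1 = n ∧ addOrderOf e2 = n ∧
    (∀ g : G, ∃ x y : ℤ, g = x • e1 + y • e2) ∧
    (∀ x y : ℤ, x • e1 + y • e2 = 0 → x • e1 = 0 ∧ y • e2 = 0)

/-- Membership in `Υ(G)` for `G = C_n ⊕ C_n`: a minimal zero-sum sequence of the
form `e1^(n-1) ∏_{ν=1}^n (x_ν e1 + e2)` for some basis `(e1, e2)` and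
`x_1, …, x_n ∈ [0, n-1]` with `x_1 + … + x_n ≡ 1 (mod n)`. -/
def InUpsilon {G : Type*} [AddCommGroup G] (n : ℕ) (S : Multiset G) : Prop :=
  IsMinZeroSum S ∧ ∃ e1 e2 : G, IsBasisPair n e1 e2 ∧
    ∃ x : Fin n → ℕ, (∀ ν, x ν ≤ n - 1) ∧ (∑ ν, x ν) ≡ 1 [MOD n] ∧
      S = Multiset.replicate (n - 1) e1 +
        Multiset.map (fun ν => (x ν : ℤ) • e1 + e2) Finset.univ.val

/-- Membership in `Υ_u(G)`: member of `Υ(G)` with a unique term of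
multiplicity `n - 1`. -/
def InUpsilonU {G : Type*} [AddCommGroup G] [DecidableEq G] (n : ℕ)
    (S : Multiset G) : Prop :=
  InUpsilon n S ∧ ∃! g : G, S.count g = n - 1

/-- Membership in `Υ_nu(G) = Υ(G) \ Υ_u(G)`. -/
def InUpsilonNU {G : Type*} [AddCommGroup G] [DecidableEq G] (n : ℕ)
    (S : Multiset G) : Prop :=
  InUpsilon n S ∧ ¬ ∃! g : G, S.count g = n - 1

theorem stmt_10 (m : ℕ) (hm : 4 ≤ m)
    (f1 f2 : ZMod m × ZMod m) (hbasis : IsBasisPair m f1 f2)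
    (S : Multiset (ZMod m × ZMod m))
    (hS : S = Multiset.replicate (m - 1) f1 + Multiset.replicate (m - 1) f2 +
        {f1 + f2})
    (g : ZMod m × ZMod m)
    (h' : InUpsilon m ((f1 + g) ::ₘ (f2 - g) ::ₘ (S - {f1, f2}))) :
    (f1 + g) ::ₘ (f2 - g) ::ₘ (S - {f1, f2}) = S ∧ (g = 0 ∨ g = -f1 + f2) := by
  obtain ⟨hmin, e1, e2, hbp, x, hxle, hxsum, heq⟩ := h'
  obtain ⟨he1, he2, hgen, hind⟩ := hbp
  obtain ⟨hf1, hf2, hfgen, hfind⟩ := hbasis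
  have hf1ne : f1 ≠ 0 := by
    intro h; rw [h, addOrderOf_zero] at hf1; omega
  have hf2ne : f2 ≠ 0 := by
    intro h; rw [h, addOrderOf_zero] at hf2; omega
  have he1ne : e1 ≠ 0 := by
    intro h; rw [h, addOrderOf_zero] at he1; omega
  have he2ne : e2 ≠ 0 := by
    intro h; rw [h, addOrderOf_zero] at he2; omega
  set T : Multiset (ZMod m × ZMod m) :=
    Multiset.replicate (m-2) f1 + Multiset.replicate (m-2) f2 + {f1+f2} with hT
  have hST : S = {f1, f2} + T := by
    rw [hS, hT]
    ext a
    simp only [Multiset.count_add, Multiset.count_replicate, Multiset.count_singleton,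
      Multiset.insert_eq_cons, Multiset.count_cons, eq_comm (b := a)]
    split_ifs <;> omega
  have hsub : S - {f1, f2} = T := by rw [hST, add_tsub_cancel_left]
  have hback : f1 ::ₘ f2 ::ₘ (S - {f1, f2}) = S := by
    rw [hsub, hST, Multiset.insert_eq_cons, Multiset.cons_add, Multiset.singleton_add]
  have hcount : ((f1+g) ::ₘ (f2-g) ::ₘ (S - {f1, f2})).count e1 = m - 1 := by
    rw [heq, Multiset.count_add, Multiset.count_replicate, if_pos rfl]
    have hzero : (Multiset.map (fun ν => (x ν : ℤ) • e1 + e2) Finset.univ.val).count e1 = 0 := by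
      rw [Multiset.count_eq_zero]
      intro hmem
      obtain ⟨ν, _, hν⟩ := Multiset.mem_map.mp hmem
      have h0 : ((x ν : ℤ) - 1) • e1 + (1 : ℤ) • e2 = 0 := by
        rw [sub_smul, one_smul, one_smul,
          show (x ν : ℤ) • e1 - e1 + e2 = ((x ν : ℤ) • e1 + e2) - e1 by abel, hν]
        simp
      have := (hind _ _ h0).2
      rw [one_smul] at this
      exact he2ne this
    rw [hzero, add_zero]
  rw [hsub, hT] at hcount
  simp only [Multiset.count_cons, Multiset.count_add, Multiset.count_replicate,
    Multiset.count_singleton, eq_comm (b := e1)] at hcount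
  split_ifs at hcount <;> try omega
  all_goals rename_i h1 h2 h3 h4 h5
  -- h1, ¬h2, h3, ¬h4, ¬h5 : f1 = f1 + f2, contradiction
  · exact absurd (left_eq_add.mp (h1.symm.trans h3)) hf2ne
  -- h1, ¬h2, ¬h3, h4, ¬h5 : f1 = f2 - g, so g = f2 - f1
  · have hg : g = f2 - f1 := by
      have h := h1.symm.trans h4
      rw [h]; abel
    have hA : f1 + g = f2 := by rw [hg]; abel
    have hB : f2 - g = f1 := by rw [hg]; abel
    refine ⟨?_, Or.inr (by rw [hg]; abel)⟩
    rw [hA, hB, Multiset.cons_swap]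
    exact hback
  -- h1, ¬h2, ¬h3, ¬h4, h5 : f1 = f1 + g, so g = 0
  · have hg : g = 0 := left_eq_add.mp (h1.symm.trans h5)
    refine ⟨?_, Or.inl hg⟩
    rw [hg, add_zero, sub_zero]
    exact hback
  -- ¬h1, h2, h3, ¬h4, ¬h5 : f2 = f1 + f2, contradiction
  · exact absurd (right_eq_add.mp (h2.symm.trans h3)) hf1ne
  -- ¬h1, h2, ¬h3, h4, ¬h5 : f2 = f2 - g, so g = 0
  · have hg : g = 0 := sub_eq_self.mp (h2.symm.trans h4).symm
    refine ⟨?_, Or.inl hg⟩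
    rw [hg, add_zero, sub_zero]
    exact hback
  -- ¬h1, h2, ¬h3, ¬h4, h5 : f2 = f1 + g, so g = f2 - f1
  · have hg : g = f2 - f1 := by
      have h := h2.symm.trans h5
      rw [h]; abel
    have hA : f1 + g = f2 := by rw [hg]; abel
    have hB : f2 - g = f1 := by rw [hg]; abel
    refine ⟨?_, Or.inr (by rw [hg]; abel)⟩
    rw [hA, hB, Multiset.cons_swap]
    exact hback
  -- ¬h1, ¬h2, h3, h4, h5 : e1 = 0, contradiction
  · have h0 : e1 + e1 = e1 := by
      calc e1 + e1 = (f1 + g) + (f2 - g) := by rw [← h5, ← h4]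
        _ = f1 + f2 := by abel
        _ = e1 := h3.symm
    exact absurd (add_eq_left.mp h0) he1ne
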